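/- arXiv:1704.04581 — 5 statements merged into one kernel-verified Lean document; each statement's English description precedes it below -/
import Mathlib

section
/- Consider minimizing $f(x) = -\frac{1}{6}\mathcal{A}x^3$ over the set $S = \{x \in \mathbb{R}^{n_1 n_2} : x \geq 0,\ e^T \bar x_i = 1 \text{ for } i=1,\dots,n_1\}$, where $\mathcal{A}$ is a nonnegative symmetric tensor whose nonzero entries $\mathcal{A}_{ljk}$ have $l,j,k$ in three distinct blocks. Then there exists a global minimizer $x^*$ of $f$ over $S$ with exactly $n_1$ nonzero entries (one per block, each equal to 1). -/
open Finset

/-- Swap an outer sum past three inner sums. -/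
lemma sum_swap3 {α β γ δ : Type*} [Fintype α] [Fintype β] [Fintype γ] [Fintype δ]
    (F : α → β → γ → δ → ℝ) :
    ∑ σ : α, ∑ a : β, ∑ b : γ, ∑ c : δ, F σ a b c
      = ∑ a : β, ∑ b : γ, ∑ c : δ, ∑ σ : α, F σ a b c := by
  rw [Finset.sum_comm]
  refine Finset.sum_congr rfl fun a _ => ?_
  rw [Finset.sum_comm]
  exact Finset.sum_congr rfl fun b _ => Finset.sum_comm

/-- Key multilinearity identity: averaging the indicator of a vertex against the
product weights recovers the product of coordinates, when the three blocks are distinct. -/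
lemma key_aux {n1 n2 : ℕ} (y : Fin n1 → Fin n2 → ℝ) (hy : ∀ i, ∑ p, y i p = 1)
    (i j k : Fin n1) (p q r : Fin n2) (hij : i ≠ j) (hik : i ≠ k) (hjk : j ≠ k) :
    ∑ σ : Fin n1 → Fin n2, (∏ l, y l (σ l)) *
      ((if σ i = p then (1:ℝ) else 0) * (if σ j = q then (1:ℝ) else 0) *
        (if σ k = r then (1:ℝ) else 0))
      = y i p * y j q * y k r := by
  set g : Fin n1 → Fin n2 → ℝ := fun l s => y l s *
    ((if l = i then (if s = p then (1:ℝ) else 0) else 1) *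
     (if l = j then (if s = q then (1:ℝ) else 0) else 1) *
     (if l = k then (if s = r then (1:ℝ) else 0) else 1)) with hg
  have hA : ∀ σ : Fin n1 → Fin n2, ∏ l, g l (σ l) = (∏ l, y l (σ l)) *
      ((if σ i = p then (1:ℝ) else 0) * (if σ j = q then (1:ℝ) else 0) *
        (if σ k = r then (1:ℝ) else 0)) := by
    intro σ
    simp only [hg, Finset.prod_mul_distrib, Finset.prod_ite_eq', Finset.mem_univ, if_true]
  have hsum : ∀ l, ∑ s, g l s =
      if l = i then y i p else if l = j then y j q else if l = k then y k r else 1 := by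
    intro l
    by_cases h1 : l = i
    · subst h1
      have : l ≠ j := hij
      have hlk : l ≠ k := hik
      simp [hg, this, hlk, mul_ite, mul_one, mul_zero, Finset.sum_ite_eq']
    · by_cases h2 : l = j
      · subst h2
        have hlk : l ≠ k := hjk
        simp [hg, h1, hlk, mul_ite, mul_one, mul_zero, Finset.sum_ite_eq']
      · by_cases h3 : l = k
        · subst h3
          simp [hg, h1, h2, mul_ite, mul_one, mul_zero, Finset.sum_ite_eq']
        · simp [hg, h1, h2, h3, hy l]
  calc ∑ σ : Fin n1 → Fin n2, (∏ l, y l (σ l)) *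
        ((if σ i = p then (1:ℝ) else 0) * (if σ j = q then (1:ℝ) else 0) *
          (if σ k = r then (1:ℝ) else 0))
      = ∑ σ : Fin n1 → Fin n2, ∏ l, g l (σ l) :=
        (Finset.sum_congr rfl fun σ _ => (hA σ).symm)
    _ = ∏ l, ∑ s, g l s := by
        rw [Finset.prod_univ_sum, Fintype.piFinset_univ]
    _ = ∏ l ∈ ({i, j, k} : Finset (Fin n1)), ∑ s, g l s := by
        refine (Finset.prod_subset (Finset.subset_univ _) ?_).symm
        intro l _ hl
        simp only [Finset.mem_insert, Finset.mem_singleton, not_or] at hl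
        rw [hsum]
        simp [hl.1, hl.2.1, hl.2.2]
    _ = y i p * y j q * y k r := by
        rw [Finset.prod_insert (by simp [hij, hik]),
          Finset.prod_insert (by simp [hjk]), Finset.prod_singleton,
          hsum, hsum, hsum]
        simp [hij, hik, hjk, hij.symm, hjk.symm, hik.symm, mul_assoc]

/-- the relaxation of hypergraph matching has a global minimizer with exactly
one nonzero entry per block, each equal to 1 (hence `n1` nonzero entries in total). -/
theorem stmt_7 (n1 n2 : ℕ) (hn2 : 0 < n2)
    (A : (Fin n1 × Fin n2) → (Fin n1 × Fin n2) → (Fin n1 × Fin n2) → ℝ)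
    (hA0 : ∀ a b c, 0 ≤ A a b c)
    (hsym : ∀ a b c, A a b c = A b a c ∧ A a b c = A a c b)
    (hblk : ∀ a b c, A a b c ≠ 0 → a.1 ≠ b.1 ∧ a.1 ≠ c.1 ∧ b.1 ≠ c.1)
    (f : (Fin n1 → Fin n2 → ℝ) → ℝ)
    (hf : ∀ x, f x = -(1/6) * ∑ a : Fin n1 × Fin n2, ∑ b : Fin n1 × Fin n2,
      ∑ c : Fin n1 × Fin n2, A a b c * x a.1 a.2 * x b.1 b.2 * x c.1 c.2) :
    ∃ x : Fin n1 → Fin n2 → ℝ,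
      (∀ i p, 0 ≤ x i p) ∧ (∀ i, ∑ p, x i p = 1) ∧
      (∀ i, ∃ p, x i p = 1 ∧ ∀ q, q ≠ p → x i q = 0) ∧
      (Finset.univ.filter fun ip : Fin n1 × Fin n2 => x ip.1 ip.2 ≠ 0).card = n1 ∧
      ∀ y : Fin n1 → Fin n2 → ℝ,
        (∀ i p, 0 ≤ y i p) → (∀ i, ∑ p, y i p = 1) → f x ≤ f y := by
  haveI : Nonempty (Fin n2) := ⟨⟨0, hn2⟩⟩
  set vert : (Fin n1 → Fin n2) → Fin n1 → Fin n2 → ℝ :=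
    fun σ l s => if σ l = s then (1:ℝ) else 0 with hvert
  -- the expansion of f at a general feasible point as a convex combination of vertex values
  have id1 : ∀ y : Fin n1 → Fin n2 → ℝ, (∀ i, ∑ p, y i p = 1) →
      f y = ∑ σ : Fin n1 → Fin n2, (∏ i, y i (σ i)) * f (vert σ) := by
    intro y hy
    have hσ : ∀ σ : Fin n1 → Fin n2, (∏ i, y i (σ i)) * f (vert σ)
        = ∑ a : Fin n1 × Fin n2, ∑ b : Fin n1 × Fin n2, ∑ c : Fin n1 × Fin n2,
            -(1/6) * (A a b c * ((∏ i, y i (σ i)) *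
              ((if σ a.1 = a.2 then (1:ℝ) else 0) * (if σ b.1 = b.2 then (1:ℝ) else 0) *
                (if σ c.1 = c.2 then (1:ℝ) else 0)))) := by
      intro σ
      rw [hf]
      simp only [Finset.mul_sum, hvert]
      exact Finset.sum_congr rfl fun a _ => Finset.sum_congr rfl fun b _ =>
        Finset.sum_congr rfl fun c _ => by ring
    have hinner : ∀ a b c : Fin n1 × Fin n2,
        ∑ σ : Fin n1 → Fin n2, -(1/6) * (A a b c * ((∏ i, y i (σ i)) *
            ((if σ a.1 = a.2 then (1:ℝ) else 0) * (if σ b.1 = b.2 then (1:ℝ) else 0) *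
              (if σ c.1 = c.2 then (1:ℝ) else 0))))
          = -(1/6) * (A a b c * y a.1 a.2 * y b.1 b.2 * y c.1 c.2) := by
      intro a b c
      by_cases hA : A a b c = 0
      · simp [hA]
      · obtain ⟨h1, h2, h3⟩ := hblk a b c hA
        have hk := key_aux y hy a.1 b.1 c.1 a.2 b.2 c.2 h1 h2 h3
        calc ∑ σ : Fin n1 → Fin n2, -(1/6) * (A a b c * ((∏ i, y i (σ i)) *
                ((if σ a.1 = a.2 then (1:ℝ) else 0) * (if σ b.1 = b.2 then (1:ℝ) else 0) *
                  (if σ c.1 = c.2 then (1:ℝ) else 0))))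
            = (-(1/6) * A a b c) * ∑ σ : Fin n1 → Fin n2, (∏ i, y i (σ i)) *
                ((if σ a.1 = a.2 then (1:ℝ) else 0) * (if σ b.1 = b.2 then (1:ℝ) else 0) *
                  (if σ c.1 = c.2 then (1:ℝ) else 0)) := by
              rw [Finset.mul_sum]
              exact Finset.sum_congr rfl fun σ _ => by ring
          _ = -(1/6) * (A a b c * y a.1 a.2 * y b.1 b.2 * y c.1 c.2) := by rw [hk]; ring
    calc f y = -(1/6) * ∑ a : Fin n1 × Fin n2, ∑ b : Fin n1 × Fin n2,
          ∑ c : Fin n1 × Fin n2, A a b c * y a.1 a.2 * y b.1 b.2 * y c.1 c.2 := hf y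
      _ = ∑ a : Fin n1 × Fin n2, ∑ b : Fin n1 × Fin n2, ∑ c : Fin n1 × Fin n2,
            -(1/6) * (A a b c * y a.1 a.2 * y b.1 b.2 * y c.1 c.2) := by
          simp only [Finset.mul_sum]
      _ = ∑ a : Fin n1 × Fin n2, ∑ b : Fin n1 × Fin n2, ∑ c : Fin n1 × Fin n2,
            ∑ σ : Fin n1 → Fin n2, -(1/6) * (A a b c * ((∏ i, y i (σ i)) *
              ((if σ a.1 = a.2 then (1:ℝ) else 0) * (if σ b.1 = b.2 then (1:ℝ) else 0) *
                (if σ c.1 = c.2 then (1:ℝ) else 0)))) := by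
          exact Finset.sum_congr rfl fun a _ => Finset.sum_congr rfl fun b _ =>
            Finset.sum_congr rfl fun c _ => (hinner a b c).symm
      _ = ∑ σ : Fin n1 → Fin n2, ∑ a : Fin n1 × Fin n2, ∑ b : Fin n1 × Fin n2,
            ∑ c : Fin n1 × Fin n2, -(1/6) * (A a b c * ((∏ i, y i (σ i)) *
              ((if σ a.1 = a.2 then (1:ℝ) else 0) * (if σ b.1 = b.2 then (1:ℝ) else 0) *
                (if σ c.1 = c.2 then (1:ℝ) else 0)))) :=
          (sum_swap3 _).symm
      _ = ∑ σ : Fin n1 → Fin n2, (∏ i, y i (σ i)) * f (vert σ) :=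
          Finset.sum_congr rfl fun σ _ => (hσ σ).symm
  -- pick a minimizing vertex
  obtain ⟨σ0, -, hσ0⟩ := Finset.exists_min_image (Finset.univ : Finset (Fin n1 → Fin n2))
    (fun σ => f (vert σ)) Finset.univ_nonempty
  refine ⟨vert σ0, ?_, ?_, ?_, ?_, ?_⟩
  · intro i p
    simp only [hvert]
    split <;> norm_num
  · intro i
    simp [hvert]
  · intro i
    refine ⟨σ0 i, by simp [hvert], fun q hq => ?_⟩
    simp only [hvert]
    exact if_neg (fun h => hq h.symm)
  · have hset : (Finset.univ.filter fun ip : Fin n1 × Fin n2 => vert σ0 ip.1 ip.2 ≠ 0)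
        = Finset.univ.image (fun i : Fin n1 => (i, σ0 i)) := by
      ext ⟨i, p⟩
      simp only [Finset.mem_filter, Finset.mem_univ, true_and, Finset.mem_image, hvert]
      constructor
      · intro h
        by_cases hp : σ0 i = p
        · exact ⟨i, hp ▸ rfl⟩
        · simp [hp] at h
      · rintro ⟨j, hj⟩
        obtain ⟨rfl, rfl⟩ := Prod.mk.injEq .. ▸ hj
        simp
    rw [hset, Finset.card_image_of_injective _ (fun a b h => congrArg Prod.fst h),
      Finset.card_univ, Fintype.card_fin]
  · intro y hy0 hy1
    rw [id1 y hy1]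
    have hw1 : ∑ σ : Fin n1 → Fin n2, ∏ i, y i (σ i) = 1 := by
      rw [← Fintype.piFinset_univ, ← Finset.prod_univ_sum]
      simp [hy1]
    calc f (vert σ0) = ∑ σ : Fin n1 → Fin n2, (∏ i, y i (σ i)) * f (vert σ0) := by
          rw [← Finset.sum_mul, hw1, one_mul]
      _ ≤ ∑ σ : Fin n1 → Fin n2, (∏ i, y i (σ i)) * f (vert σ) := by
          refine Finset.sum_le_sum fun σ _ => ?_
          exact mul_le_mul_of_nonneg_left (hσ0 σ (Finset.mem_univ σ))
            (Finset.prod_nonneg fun i _ => hy0 i (σ i))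
end

section
/- Let $y^0$ be a global minimizer of $f(x) = -\frac{1}{6}\mathcal{A}x^3$ over $S = \{x \geq 0,\ e^T \bar x_i = 1\ \forall i\}$, where $\mathcal{A}$ is nonnegative, symmetric, and its nonzero entries involve three distinct blocks. Fix a block $i$ and an index $p_0$ with $(\bar y^0_i)_{p_0} > 0$. Define $y^1$ by replacing block $i$ of $y^0$ with the standard basis vector $e_{p_0} \in \mathbb{R}^{n_2}$ and keeping all other blocks. Then $f(y^1) = f(y^0)$, so $y^1$ is also a global minimizer, and $\|y^1\|_0 \leq \|y^0\|_0$ with strict inequality if block $i$ of $y^0$ had more than one nonzero entry. -/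
open Finset

/-- replacing one block of a global minimizer of the relaxation by a vertex
of the simplex supported in that block's support keeps the objective value, hence yields
another global minimizer with no larger (possibly strictly smaller) support. -/
theorem stmt_8 (n1 n2 : ℕ)
    (A : (Fin n1 × Fin n2) → (Fin n1 × Fin n2) → (Fin n1 × Fin n2) → ℝ)
    (hA0 : ∀ a b c, 0 ≤ A a b c)
    (hsym : ∀ a b c, A a b c = A b a c ∧ A a b c = A a c b)
    (hblk : ∀ a b c, A a b c ≠ 0 → a.1 ≠ b.1 ∧ a.1 ≠ c.1 ∧ b.1 ≠ c.1)
    (f : (Fin n1 → Fin n2 → ℝ) → ℝ)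
    (hf : ∀ x, f x = -(1/6) * ∑ a : Fin n1 × Fin n2, ∑ b : Fin n1 × Fin n2,
      ∑ c : Fin n1 × Fin n2, A a b c * x a.1 a.2 * x b.1 b.2 * x c.1 c.2)
    (y0 : Fin n1 → Fin n2 → ℝ)
    (h0nn : ∀ i p, 0 ≤ y0 i p) (h0sum : ∀ i, ∑ p, y0 i p = 1)
    (h0min : ∀ y : Fin n1 → Fin n2 → ℝ,
      (∀ i p, 0 ≤ y i p) → (∀ i, ∑ p, y i p = 1) → f y0 ≤ f y)
    (i : Fin n1) (p0 : Fin n2) (hp0 : 0 < y0 i p0)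
    (y1 : Fin n1 → Fin n2 → ℝ)
    (hy1 : ∀ i' p, y1 i' p =
      if i' = i then (if p = p0 then (1:ℝ) else 0) else y0 i' p) :
    f y1 = f y0 ∧
    (∀ y : Fin n1 → Fin n2 → ℝ,
      (∀ i p, 0 ≤ y i p) → (∀ i, ∑ p, y i p = 1) → f y1 ≤ f y) ∧
    (Finset.univ.filter fun ip : Fin n1 × Fin n2 => y1 ip.1 ip.2 ≠ 0).card ≤
      (Finset.univ.filter fun ip : Fin n1 × Fin n2 => y0 ip.1 ip.2 ≠ 0).card ∧
    (1 < (Finset.univ.filter fun q : Fin n2 => y0 i q ≠ 0).card →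
      (Finset.univ.filter fun ip : Fin n1 × Fin n2 => y1 ip.1 ip.2 ≠ 0).card <
        (Finset.univ.filter fun ip : Fin n1 × Fin n2 => y0 ip.1 ip.2 ≠ 0).card) := by
  classical
  -- the family of "vertex" replacements of block i
  set Y : Fin n2 → (Fin n1 → Fin n2 → ℝ) :=
    fun p i' q => if i' = i then (if q = p then (1:ℝ) else 0) else y0 i' q with hYdef
  have hy1Y : y1 = Y p0 := by
    funext i' q; rw [hy1, hYdef]
  have hYnn : ∀ p i' q, 0 ≤ Y p i' q := by
    intro p i' q; simp only [hYdef]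
    split_ifs
    · norm_num
    · norm_num
    · exact h0nn i' q
  have hYsum : ∀ p i', ∑ q, Y p i' q = 1 := by
    intro p i'; by_cases h : i' = i
    · simp [hYdef, h]
    · simp [hYdef, h, h0sum i']
  have hge : ∀ p, f y0 ≤ f (Y p) := fun p => h0min _ (hYnn p) (hYsum p)
  -- pointwise identity
  have point : ∀ a b c : Fin n1 × Fin n2,
      ∑ p, y0 i p * (A a b c * Y p a.1 a.2 * Y p b.1 b.2 * Y p c.1 c.2)
        = A a b c * y0 a.1 a.2 * y0 b.1 b.2 * y0 c.1 c.2 := by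
    intro a b c
    by_cases hA : A a b c = 0
    · simp [hA]
    obtain ⟨hab, hac, hbc⟩ := hblk a b c hA
    by_cases ha : a.1 = i
    · have hb : b.1 ≠ i := fun h => hab (ha.trans h.symm)
      have hc : c.1 ≠ i := fun h => hac (ha.trans h.symm)
      simp only [hYdef, ha, if_pos rfl, if_neg hb, if_neg hc]
      rw [Finset.sum_eq_single a.2 (fun q _ hq => by simp [Ne.symm hq]) (by simp)]
      simp; ring
    · by_cases hb : b.1 = i
      · have hc : c.1 ≠ i := fun h => hbc (hb.trans h.symm)
        simp only [hYdef, hb, if_pos rfl, if_neg ha, if_neg hc]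
        rw [Finset.sum_eq_single b.2 (fun q _ hq => by simp [Ne.symm hq]) (by simp)]
        simp; ring
      · by_cases hc : c.1 = i
        · simp only [hYdef, hc, if_pos rfl, if_neg ha, if_neg hb]
          rw [Finset.sum_eq_single c.2 (fun q _ hq => by simp [Ne.symm hq]) (by simp)]
          simp; ring
        · simp only [hYdef, if_neg ha, if_neg hb, if_neg hc]
          rw [← Finset.sum_mul, h0sum, one_mul]
  -- key identity : f y0 is the convex combination of the f (Y p)
  have key : ∑ p, y0 i p * f (Y p) = f y0 := by
    have h1 : ∀ p, y0 i p * f (Y p)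
        = -(1/6) * ∑ a : Fin n1 × Fin n2, ∑ b : Fin n1 × Fin n2, ∑ c : Fin n1 × Fin n2,
            y0 i p * (A a b c * Y p a.1 a.2 * Y p b.1 b.2 * Y p c.1 c.2) := by
      intro p
      rw [hf]
      simp_rw [← Finset.mul_sum]
      ring
    calc ∑ p, y0 i p * f (Y p)
        = -(1/6) * ∑ p, ∑ a : Fin n1 × Fin n2, ∑ b : Fin n1 × Fin n2, ∑ c : Fin n1 × Fin n2,
            y0 i p * (A a b c * Y p a.1 a.2 * Y p b.1 b.2 * Y p c.1 c.2) := by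
          simp_rw [h1]; rw [← Finset.mul_sum]
      _ = -(1/6) * ∑ a : Fin n1 × Fin n2, ∑ b : Fin n1 × Fin n2, ∑ c : Fin n1 × Fin n2,
            ∑ p, y0 i p * (A a b c * Y p a.1 a.2 * Y p b.1 b.2 * Y p c.1 c.2) := by
          congr 1
          rw [Finset.sum_comm]
          refine Finset.sum_congr rfl fun a _ => ?_
          rw [Finset.sum_comm]
          refine Finset.sum_congr rfl fun b _ => ?_
          rw [Finset.sum_comm]
      _ = f y0 := by
          rw [hf]
          congr 1
          exact Finset.sum_congr rfl fun a _ => Finset.sum_congr rfl fun b _ =>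
            Finset.sum_congr rfl fun c _ => point a b c
  -- deduce f (Y p0) = f y0
  have hzero : ∑ p, y0 i p * (f (Y p) - f y0) = 0 := by
    have : ∑ p, y0 i p * (f (Y p) - f y0)
        = (∑ p, y0 i p * f (Y p)) - (∑ p, y0 i p) * f y0 := by
      rw [Finset.sum_mul, ← Finset.sum_sub_distrib]
      exact Finset.sum_congr rfl fun p _ => by ring
    rw [this, key, h0sum, one_mul, sub_self]
  have hnn : ∀ p ∈ (univ : Finset (Fin n2)), 0 ≤ y0 i p * (f (Y p) - f y0) :=
    fun p _ => mul_nonneg (h0nn i p) (sub_nonneg.2 (hge p))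
  have hp0z := (Finset.sum_eq_zero_iff_of_nonneg hnn).1 hzero p0 (mem_univ _)
  have hfy1 : f (Y p0) = f y0 := by
    rcases mul_eq_zero.1 hp0z with h | h
    · exact absurd h (ne_of_gt hp0)
    · linarith [sub_eq_zero.1 h]
  -- support counting
  have hcard : ∀ y : Fin n1 → Fin n2 → ℝ,
      (univ.filter fun ip : Fin n1 × Fin n2 => y ip.1 ip.2 ≠ 0).card
        = ∑ i' : Fin n1, (univ.filter fun q => y i' q ≠ 0).card := by
    intro y
    rw [Finset.card_filter, Fintype.sum_prod_type]
    exact Finset.sum_congr rfl fun i' _ => (Finset.card_filter _ _).symm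
  have hb1 : (univ.filter fun q => y1 i q ≠ 0) = {p0} := by
    ext q
    simp only [mem_filter, mem_univ, true_and, Finset.mem_singleton, hy1, if_pos rfl]
    by_cases h : q = p0 <;> simp [h]
  have hblockle : ∀ i' : Fin n1,
      (univ.filter fun q => y1 i' q ≠ 0).card ≤ (univ.filter fun q => y0 i' q ≠ 0).card := by
    intro i'
    by_cases h : i' = i
    · subst h
      rw [hb1, Finset.card_singleton]
      exact Finset.card_pos.2 ⟨p0, by simp [ne_of_gt hp0]⟩
    · have : (univ.filter fun q => y1 i' q ≠ 0) = (univ.filter fun q => y0 i' q ≠ 0) := by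
        apply Finset.filter_congr; intro q _; rw [hy1, if_neg h]
      rw [this]
  refine ⟨by rw [hy1Y]; exact hfy1, ?_, ?_, ?_⟩
  · intro y hy hys
    rw [hy1Y, hfy1]; exact h0min y hy hys
  · rw [hcard y1, hcard y0]
    exact Finset.sum_le_sum fun i' _ => hblockle i'
  · intro hlt
    rw [hcard y1, hcard y0]
    refine Finset.sum_lt_sum (fun i' _ => hblockle i') ⟨i, mem_univ _, ?_⟩
    rw [hb1, Finset.card_singleton]
    exact hlt
end

section
/- Let $\hat f: \mathbb{R}^n \to \mathbb{R}$ be continuous and affine in each block $\bar x_i$ (with $\nabla_{\bar x_i}\hat f$ independent of $\bar x_i$, and $\hat f$ decomposing as $\hat f(x) = \bar x_i^T \nabla_{\bar x_i}\hat f(x) + \hat f^{-i}(x_{-i})$ up to an additive term depending only on $x_{-i}$). Consider minimizing $\hat f$ over $\{x \geq 0,\ e^T \bar x_i = \alpha_i,\ i = 1,\dots,n_1\}$ with $\alpha_i > 0$ and blocks $\bar x_i \in \mathbb{R}^{m_i}$, $\sum_i m_i = n$. Then there exists a global minimizer $x^*$ with exactly one nonzero entry per block (so $\|x^*\|_0 =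 n_1$), and $x^*$ is also a global minimizer of the same problem with the added constraint $\|x\|_0 \leq n_1$. -/
/-- for a continuous objective that is affine in each block, the problem of
minimizing over a product of scaled simplices (blocks of sizes `m i`, block sums `α i`)
has a global minimizer with exactly one nonzero entry per block (equal to `α i`), which
is also a global minimizer under the additional sparsity constraint `‖x‖₀ ≤ n1`. -/
theorem stmt_10 (n1 : ℕ) (m : Fin n1 → ℕ) (hm : ∀ i, 0 < m i)
    (α : Fin n1 → ℝ) (hα : ∀ i, 0 < α i)
    (f : ((i : Fin n1) → Fin (m i) → ℝ) → ℝ)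
    (hcont : Continuous f)
    (haffine : ∀ (i : Fin n1) (x d : (i : Fin n1) → Fin (m i) → ℝ),
      (∀ i', i' ≠ i → ∀ p, d i' p = 0) →
      ∀ t : ℝ, f (x + t • d) = f x + t * (f (x + d) - f x)) :
    ∃ x : (i : Fin n1) → Fin (m i) → ℝ,
      (∀ i p, 0 ≤ x i p) ∧ (∀ i, ∑ p, x i p = α i) ∧
      (∀ i, ∃ p, x i p = α i ∧ ∀ q, q ≠ p → x i q = 0) ∧
      (Finset.univ.filter fun s : Σ i : Fin n1, Fin (m i) => x s.1 s.2 ≠ 0).card = n1 ∧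
      (∀ y : (i : Fin n1) → Fin (m i) → ℝ,
        (∀ i p, 0 ≤ y i p) → (∀ i, ∑ p, y i p = α i) → f x ≤ f y) ∧
      (∀ y : (i : Fin n1) → Fin (m i) → ℝ,
        (∀ i p, 0 ≤ y i p) → (∀ i, ∑ p, y i p = α i) →
        (Finset.univ.filter fun s : Σ i : Fin n1, Fin (m i) => y s.1 s.2 ≠ 0).card ≤ n1 →
        f x ≤ f y) := by
  classical
  -- additivity in a block
  have add2 : ∀ (i : Fin n1) (x d1 d2 : (i : Fin n1) → Fin (m i) → ℝ),
      (∀ i', i' ≠ i → ∀ p, d1 i' p = 0) → (∀ i', i' ≠ i → ∀ p, d2 i' p = 0) →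
      f (x + d1 + d2) + f x = f (x + d1) + f (x + d2) := by
    intro i x d1 d2 h1 h2
    have e1 := haffine i (x + d1) (d2 - d1)
      (fun i' hi' p => by simp [Pi.sub_apply, h1 i' hi' p, h2 i' hi' p]) (1/2)
    have e2 := haffine i x (d1 + d2)
      (fun i' hi' p => by simp [h1 i' hi' p, h2 i' hi' p]) (1/2)
    have key : x + d1 + (1/2 : ℝ) • (d2 - d1) = x + (1/2 : ℝ) • (d1 + d2) := by
      module
    have key2 : x + d1 + (d2 - d1) = x + d2 := by module
    have key3 : x + (d1 + d2) = x + d1 + d2 := by module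
    rw [key, key2] at e1
    rw [key3] at e2
    rw [e1] at e2
    linarith
  -- sum version of affinity
  have sumAffine : ∀ (i : Fin n1) (x : (i : Fin n1) → Fin (m i) → ℝ)
      (s : Finset (Fin (m i))) (c : Fin (m i) → ℝ)
      (d : Fin (m i) → (i : Fin n1) → Fin (m i) → ℝ),
      (∀ p i', i' ≠ i → ∀ q, d p i' q = 0) →
      f (x + ∑ p ∈ s, c p • d p) = f x + ∑ p ∈ s, c p * (f (x + d p) - f x) := by
    intro i x s c d hd
    induction s using Finset.induction_on with
    | empty => simp
    | @insert a s ha ih =>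
      rw [Finset.sum_insert ha, Finset.sum_insert ha]
      have hsum : ∀ i', i' ≠ i → ∀ q, (∑ p ∈ s, c p • d p) i' q = 0 := by
        intro i' hi' q
        simp only [Finset.sum_apply]
        exact Finset.sum_eq_zero fun p _ => by simp [hd p i' hi' q]
      have hca : ∀ i', i' ≠ i → ∀ q, (c a • d a) i' q = 0 := by
        intro i' hi' q
        simp [hd a i' hi' q]
      have h2 := add2 i x (c a • d a) (∑ p ∈ s, c p • d p) hca hsum
      have h3 : x + (c a • d a + ∑ p ∈ s, c p • d p)
          = x + c a • d a + ∑ p ∈ s, c p • d p := by module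
      have h4 := haffine i x (d a) (hd a) (c a)
      rw [h3]
      have : f (x + c a • d a + ∑ p ∈ s, c p • d p)
          = f (x + c a • d a) + f (x + ∑ p ∈ s, c p • d p) - f x := by linarith
      rw [this, h4, ih]
      ring
  -- one block replacement step
  have blockStep : ∀ (i : Fin n1) (y : (i : Fin n1) → Fin (m i) → ℝ),
      (∀ i p, 0 ≤ y i p) → (∀ i, ∑ p, y i p = α i) →
      ∃ p : Fin (m i),
        f (Function.update y i (fun q => if q = p then α i else 0)) ≤ f y := by
    intro i y hy1 hy2
    set v : Fin (m i) → Fin (m i) → ℝ := fun p q => if q = p then α i else 0 with hv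
    set d : Fin (m i) → (i : Fin n1) → Fin (m i) → ℝ :=
      fun p => Function.update (0 : (i : Fin n1) → Fin (m i) → ℝ) i
        (fun q => v p q - y i q) with hdd
    have hd : ∀ p i', i' ≠ i → ∀ q, d p i' q = 0 := by
      intro p i' hi' q
      simp [hdd, Function.update_of_ne hi']
    set lam : Fin (m i) → ℝ := fun p => y i p / α i with hlam
    have hlamnn : ∀ p, 0 ≤ lam p := fun p => div_nonneg (hy1 i p) (hα i).le
    have hlamsum : ∑ p, lam p = 1 := by
      rw [hlam]
      rw [← Finset.sum_div, hy2 i, div_self (hα i).ne']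
    have hupd : ∀ p, y + d p = Function.update y i (v p) := by
      intro p
      funext i' q
      by_cases h : i' = i
      · subst h
        simp [hdd]
      · simp [hdd, Function.update_of_ne h]
    have hzero : (∑ p, lam p • d p) = 0 := by
      funext j q
      simp only [Finset.sum_apply, Pi.smul_apply, Pi.zero_apply]
      by_cases h : j = i
      · subst h
        have hterm : ∀ p ∈ (Finset.univ : Finset (Fin (m j))),
            lam p • (d p j q) = lam p * v p q - lam p * y j q := by
          intro p _
          simp only [hdd, Function.update_self, smul_eq_mul]
          ring
        rw [Finset.sum_congr rfl hterm, Finset.sum_sub_distrib]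
        have h1 : ∑ p, lam p * v p q = y j q := by
          rw [hv]
          simp only [mul_ite, mul_zero]
          rw [Finset.sum_ite_eq Finset.univ q (fun p => lam p * α j)]
          simp [hlam, div_mul_cancel₀ _ (hα j).ne']
        have h2 : ∑ p, lam p * y j q = y j q := by
          rw [← Finset.sum_mul, hlamsum, one_mul]
        rw [h1, h2, sub_self]
      · exact Finset.sum_eq_zero fun p _ => by simp [hd p j h q]
    have hmain := sumAffine i y Finset.univ lam d (fun p => hd p)
    rw [hzero, add_zero] at hmain
    have hsum0 : ∑ p, lam p * (f (y + d p) - f y) = 0 := by linarith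
    by_contra hcon
    push_neg at hcon
    have hpos : ∀ p, f y < f (y + d p) := by
      intro p
      rw [hupd p]
      exact hcon p
    have : (0 : ℝ) < ∑ p, lam p * (f (y + d p) - f y) := by
      obtain ⟨p0, hp0⟩ := Finset.exists_ne_zero_of_sum_ne_zero
        (s := Finset.univ) (f := lam) (by rw [hlamsum]; norm_num)
      refine Finset.sum_pos' (fun p _ => ?_) ⟨p0, Finset.mem_univ _, ?_⟩
      · exact mul_nonneg (hlamnn p) (by linarith [hpos p])
      · exact mul_pos (lt_of_le_of_ne (hlamnn p0) (Ne.symm hp0.2)) (by linarith [hpos p0])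
    linarith
  -- replace all blocks in a finset
  have main : ∀ S : Finset (Fin n1), ∀ y : (i : Fin n1) → Fin (m i) → ℝ,
      (∀ i p, 0 ≤ y i p) → (∀ i, ∑ p, y i p = α i) →
      ∃ z : (i : Fin n1) → Fin (m i) → ℝ,
        (∀ i p, 0 ≤ z i p) ∧ (∀ i, ∑ p, z i p = α i) ∧
        (∀ i ∈ S, ∃ p, ∀ q, z i q = if q = p then α i else 0) ∧ f z ≤ f y := by
    intro S
    induction S using Finset.induction_on with
    | empty => intro y h1 h2; exact ⟨y, h1, h2, by simp, le_refl _⟩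
    | @insert a s ha ih =>
      intro y h1 h2
      obtain ⟨z, hz1, hz2, hz3, hz4⟩ := ih y h1 h2
      obtain ⟨p, hp⟩ := blockStep a z hz1 hz2
      refine ⟨Function.update z a (fun q => if q = p then α a else 0), ?_, ?_, ?_,
        hp.trans hz4⟩
      · intro i q
        by_cases h : i = a
        · subst h
          simp only [Function.update_self]
          split
          · exact (hα i).le
          · rfl
        · rw [Function.update_of_ne h]; exact hz1 i q
      · intro i
        by_cases h : i = a
        · subst h
          simp only [Function.update_self]
          rw [Finset.sum_ite_eq' Finset.univ p (fun _ => α i)]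
          simp
        · rw [Function.update_of_ne h]; exact hz2 i
      · intro i hi
        rcases Finset.mem_insert.mp hi with h | h
        · subst h
          exact ⟨p, fun q => by rw [Function.update_self]⟩
        · have hne : i ≠ a := fun he => ha (he ▸ h)
          rw [Function.update_of_ne hne]
          exact hz3 i h
  -- minimizing vertex
  have hne : Nonempty ((i : Fin n1) → Fin (m i)) := ⟨fun i => ⟨0, hm i⟩⟩
  obtain ⟨c₀, hc₀⟩ := Finite.exists_min
    (fun c : (i : Fin n1) → Fin (m i) => f (fun i q => if q = c i then α i else 0))
  set x : (i : Fin n1) → Fin (m i) → ℝ := fun i q => if q = c₀ i then α i else 0 with hx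
  have hxnn : ∀ i p, 0 ≤ x i p := by
    intro i p; rw [hx]; dsimp only; split <;> [exact (hα i).le; rfl]
  have hxsum : ∀ i, ∑ p, x i p = α i := by
    intro i
    rw [hx]
    rw [Finset.sum_ite_eq' Finset.univ (c₀ i) (fun _ => α i)]
    simp
  have hmin : ∀ y : (i : Fin n1) → Fin (m i) → ℝ,
      (∀ i p, 0 ≤ y i p) → (∀ i, ∑ p, y i p = α i) → f x ≤ f y := by
    intro y hy1 hy2
    obtain ⟨z, hz1, hz2, hz3, hz4⟩ := main Finset.univ y hy1 hy2
    choose c hc using fun i => hz3 i (Finset.mem_univ i)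
    have hz : z = fun i q => if q = c i then α i else 0 := by
      funext i q; exact hc i q
    calc f x ≤ f (fun i q => if q = c i then α i else 0) := hc₀ c
      _ = f z := by rw [hz]
      _ ≤ f y := hz4
  refine ⟨x, hxnn, hxsum, ?_, ?_, hmin, fun y hy1 hy2 _ => hmin y hy1 hy2⟩
  · intro i
    exact ⟨c₀ i, by simp [hx], fun q hq => by simp [hx, hq]⟩
  · have : (Finset.univ.filter fun s : Σ i : Fin n1, Fin (m i) => x s.1 s.2 ≠ 0)
        = Finset.univ.image (fun i : Fin n1 => (⟨i, c₀ i⟩ : Σ i : Fin n1, Fin (m i))) := by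
      ext ⟨i, q⟩
      simp only [Finset.mem_filter, Finset.mem_univ, true_and, Finset.mem_image]
      constructor
      · intro h
        refine ⟨i, ?_⟩
        have : q = c₀ i := by
          by_contra hq
          exact h (by simp [hx, hq])
        rw [this]
      · rintro ⟨i2, h⟩
        obtain ⟨h1, h2⟩ := Sigma.mk.inj_iff.mp h
        subst h1
        have hq : q = c₀ i2 := (eq_of_heq h2).symm
        simp [hx, hq, (hα i2).ne']
    rw [this, Finset.card_image_of_injective _ (fun a b hab => (Sigma.mk.inj_iff.mp hab).1)]
    simp
end

section
/- Let $x$ be a KKT point of the box-constrained quadratic-penalty problem $\min\{\theta(x) := f(x) + \frac{\sigma}{2}\sum_{i=1}^{n_1}(e^T \bar x_i - 1)^2 : 0 \leq x \leq M\}$ with $\sigma > 0$ and $M \geq 1$, where $f(x) = -\frac{1}{6}\mathcal{A}x^3$ with $\mathcal{A}$ nonnegative and symmetric. Then the constraint violations $h_i = e^T \bar x_i - 1$ satisfy $h_i \geq 0$ for all $i = 1,\dots,n_1$. -/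
/-- at a KKT point of the box-constrained quadratic penalty problem, the
equality-constraint violations `h_i = eᵀx̄_i - 1` are nonnegative. -/
theorem stmt_12 (n1 n2 : ℕ) (hn2 : 0 < n2)
    (A : (Fin n1 × Fin n2) → (Fin n1 × Fin n2) → (Fin n1 × Fin n2) → ℝ)
    (hA0 : ∀ a b c, 0 ≤ A a b c)
    (hsym : ∀ a b c, A a b c = A b a c ∧ A a b c = A a c b)
    (f : (Fin n1 → Fin n2 → ℝ) → ℝ)
    (hf : ∀ x, f x = -(1/6) * ∑ a : Fin n1 × Fin n2, ∑ b : Fin n1 × Fin n2,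
      ∑ c : Fin n1 × Fin n2, A a b c * x a.1 a.2 * x b.1 b.2 * x c.1 c.2)
    (σ M : ℝ) (hσ : 0 < σ) (hM : 1 ≤ M)
    (x : Fin n1 → Fin n2 → ℝ)
    (hbox : ∀ i p, 0 ≤ x i p ∧ x i p ≤ M)
    (g : Fin n1 → Fin n2 → ℝ)
    (hg : ∀ i p, g i p = fderiv ℝ f x (Pi.single i (Pi.single p 1)))
    (hzero : ∀ i p, x i p = 0 → 0 ≤ g i p + σ * ((∑ q, x i q) - 1))
    (hmid : ∀ i p, 0 < x i p → x i p < M → g i p + σ * ((∑ q, x i q) - 1) = 0)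
    (htop : ∀ i p, x i p = M → g i p + σ * ((∑ q, x i q) - 1) ≤ 0) :
    ∀ i, 0 ≤ (∑ q, x i q) - 1 := by
  -- evaluation CLM
  set E : (Fin n1 × Fin n2) → ((Fin n1 → Fin n2 → ℝ) →L[ℝ] ℝ) := fun a =>
    (ContinuousLinearMap.proj a.2).comp
      (ContinuousLinearMap.proj (R := ℝ) (φ := fun _ : Fin n1 => Fin n2 → ℝ) a.1) with hE
  have hev : ∀ a : Fin n1 × Fin n2,
      HasFDerivAt (fun y : Fin n1 → Fin n2 → ℝ => y a.1 a.2) (E a) x := fun a =>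
    (E a).hasFDerivAt
  have hD : HasFDerivAt f
      ((-(1/6 : ℝ)) • ∑ a : Fin n1 × Fin n2, ∑ b : Fin n1 × Fin n2, ∑ c : Fin n1 × Fin n2,
        ((A a b c * x a.1 a.2 * x b.1 b.2) • E c +
          x c.1 c.2 • ((A a b c * x a.1 a.2) • E b + x b.1 b.2 • (A a b c • E a)))) x := by
    have hfe : f = fun y => -(1/6) * ∑ a : Fin n1 × Fin n2, ∑ b : Fin n1 × Fin n2,
        ∑ c : Fin n1 × Fin n2, A a b c * y a.1 a.2 * y b.1 b.2 * y c.1 c.2 := funext hf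
    rw [hfe]
    apply HasFDerivAt.const_mul
    apply HasFDerivAt.fun_sum; intro a _
    apply HasFDerivAt.fun_sum; intro b _
    apply HasFDerivAt.fun_sum; intro c _
    exact (((hev a).const_mul (A a b c)).mul (hev b)).mul (hev c)
  have hglep : ∀ i p, g i p ≤ 0 := by
    intro i p
    rw [hg i p, hD.fderiv]
    set v : Fin n1 → Fin n2 → ℝ := Pi.single i (Pi.single p 1) with hv
    have hvnn : ∀ a : Fin n1 × Fin n2, 0 ≤ v a.1 a.2 := by
      intro a
      rw [hv]
      rcases eq_or_ne a.1 i with h | h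
      · rcases eq_or_ne a.2 p with h2 | h2
        · simp [h, h2]
        · simp [h, Pi.single_apply, h2]
      · simp [Pi.single_apply, h]
    simp only [ContinuousLinearMap.smul_apply, ContinuousLinearMap.sum_apply,
      ContinuousLinearMap.add_apply, smul_eq_mul]
    have hEv : ∀ a : Fin n1 × Fin n2, E a v = v a.1 a.2 := fun a => rfl
    have hsumnn : (0:ℝ) ≤ ∑ a : Fin n1 × Fin n2, ∑ b : Fin n1 × Fin n2, ∑ c : Fin n1 × Fin n2,
        ((A a b c * x a.1 a.2 * x b.1 b.2) * E c v +
          x c.1 c.2 * ((A a b c * x a.1 a.2) * E b v + x b.1 b.2 * (A a b c * E a v))) := by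
      apply Finset.sum_nonneg; intro a _
      apply Finset.sum_nonneg; intro b _
      apply Finset.sum_nonneg; intro c _
      rw [hEv, hEv, hEv]
      have := hA0 a b c
      have := (hbox a.1 a.2).1
      have := (hbox b.1 b.2).1
      have := (hbox c.1 c.2).1
      have := hvnn a; have := hvnn b; have := hvnn c
      positivity
    nlinarith [hsumnn]
  intro i
  by_cases hex : ∃ p, x i p < M
  · obtain ⟨p, hp⟩ := hex
    rcases eq_or_lt_of_le (hbox i p).1 with h0 | hpos
    · have h1 := hzero i p h0.symm
      have h2 := hglep i p
      nlinarith
    · have h1 := hmid i p hpos hp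
      have h2 := hglep i p
      nlinarith
  · push_neg at hex
    have hall : ∀ p, x i p = M := fun p => le_antisymm (hbox i p).2 (hex p)
    have hsum : ∑ q, x i q = n2 * M := by
      simp [hall, Finset.sum_const, Finset.card_univ, mul_comm]
    have h1 : (1:ℝ) ≤ (n2:ℝ) := by exact_mod_cast hn2
    nlinarith
end

section
/- Let $\{x^k\}_{k \in K}$ be a sequence in $\mathbb{R}^n$ converging to $z$, where $z$ is a global minimizer of $\min\{f(x): x \geq 0,\ e^T\bar x_i = 1\ \forall i\}$. Suppose there exists $k_0$ such that $\|x^k\|_0 = n_1$ for all $k \geq k_0$, $k \in K$. Then there exists $k_1 \geq k_0$ such that the support of $x^k$ equals the support of $z$ for all $k \geq k_1$, $k \in K$; in particular $\|z\|_0 = n_1$, making $z$ a global minimizer of the sparse-constrained problem. -/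
open Filter

/-- if a subsequence converging to a global minimizer `z` of the relaxation
eventually has exactly `n1` nonzero entries, then its support eventually coincides with
that of `z`; in particular `‖z‖₀ = n1` and `z` is a global minimizer of the
sparse-constrained problem. -/
theorem stmt_15 (n1 n2 : ℕ)
    (f : (Fin n1 → Fin n2 → ℝ) → ℝ)
    (x : ℕ → Fin n1 → Fin n2 → ℝ) (K : Set ℕ) (hK : K.Infinite)
    (z : Fin n1 → Fin n2 → ℝ)
    (hconv : Tendsto x (atTop ⊓ 𝓟 K) (nhds z))
    (hznn : ∀ i p, 0 ≤ z i p) (hzsum : ∀ i, ∑ p, z i p = 1)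
    (hzmin : ∀ y : Fin n1 → Fin n2 → ℝ,
      (∀ i p, 0 ≤ y i p) → (∀ i, ∑ p, y i p = 1) → f z ≤ f y)
    (k0 : ℕ)
    (hsupp : ∀ k ∈ K, k0 ≤ k →
      (Finset.univ.filter fun ip : Fin n1 × Fin n2 => x k ip.1 ip.2 ≠ 0).card = n1) :
    (∃ k1, k0 ≤ k1 ∧ ∀ k ∈ K, k1 ≤ k →
      (Finset.univ.filter fun ip : Fin n1 × Fin n2 => x k ip.1 ip.2 ≠ 0) =
      (Finset.univ.filter fun ip : Fin n1 × Fin n2 => z ip.1 ip.2 ≠ 0)) ∧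
    (Finset.univ.filter fun ip : Fin n1 × Fin n2 => z ip.1 ip.2 ≠ 0).card = n1 ∧
    (∀ y : Fin n1 → Fin n2 → ℝ,
      (∀ i p, 0 ≤ y i p) → (∀ i, ∑ p, y i p = 1) →
      (Finset.univ.filter fun ip : Fin n1 × Fin n2 => y ip.1 ip.2 ≠ 0).card ≤ n1 →
      f z ≤ f y) := by
  classical
  set S : Finset (Fin n1 × Fin n2) :=
    Finset.univ.filter fun ip : Fin n1 × Fin n2 => z ip.1 ip.2 ≠ 0 with hS
  -- each row of z has a nonzero entry
  have hrow : ∀ i : Fin n1, ∃ p, z i p ≠ 0 := by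
    intro i
    by_contra h
    push_neg at h
    have := hzsum i
    simp [h] at this
  have hcardS : n1 ≤ S.card := by
    choose g hg using hrow
    have : (Finset.univ : Finset (Fin n1)).card ≤ S.card := by
      apply Finset.card_le_card_of_injOn (fun i => (i, g i))
      · intro i _
        simp [hS, hg i]
      · intro a _ b _ hab
        exact (Prod.mk.injEq _ _ _ _).mp hab |>.1
    simpa using this
  -- eventually all entries in S are nonzero in x k
  have hev : ∀ᶠ k in atTop ⊓ 𝓟 K, ∀ ip ∈ S, x k ip.1 ip.2 ≠ 0 := by
    rw [Filter.eventually_all_finset]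
    intro ip hip
    have hne : z ip.1 ip.2 ≠ 0 := by simpa [hS] using hip
    have hcoord : Tendsto (fun k => x k ip.1 ip.2) (atTop ⊓ 𝓟 K) (nhds (z ip.1 ip.2)) := by
      have h1 : Tendsto (fun k => x k ip.1) (atTop ⊓ 𝓟 K) (nhds (z ip.1)) :=
        (continuous_apply ip.1).continuousAt.tendsto.comp hconv
      exact (continuous_apply ip.2).continuousAt.tendsto.comp h1
    exact hcoord.eventually_ne hne
  rw [Filter.eventually_inf_principal, Filter.eventually_atTop] at hev
  obtain ⟨N, hN⟩ := hev
  refine ⟨⟨max N k0, le_max_right _ _, ?_⟩, ?_, ?_⟩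
  · intro k hkK hk
    have hk0 : k0 ≤ k := le_trans (le_max_right _ _) hk
    have hNk : N ≤ k := le_trans (le_max_left _ _) hk
    have hsub : S ⊆ Finset.univ.filter fun ip : Fin n1 × Fin n2 => x k ip.1 ip.2 ≠ 0 := by
      intro ip hip
      simp only [Finset.mem_filter, Finset.mem_univ, true_and]
      exact hN k hNk hkK ip hip
    have hcardx := hsupp k hkK hk0
    exact (Finset.eq_of_subset_of_card_le hsub (by omega)).symm
  · -- pick a large k in K
    obtain ⟨k, hkK, hk⟩ := hK.exists_gt (max N k0)
    have hk0 : k0 ≤ k := le_trans (le_max_right _ _) hk.le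
    have hNk : N ≤ k := le_trans (le_max_left _ _) hk.le
    have hsub : S ⊆ Finset.univ.filter fun ip : Fin n1 × Fin n2 => x k ip.1 ip.2 ≠ 0 := by
      intro ip hip
      simp only [Finset.mem_filter, Finset.mem_univ, true_and]
      exact hN k hNk hkK ip hip
    have hcardx := hsupp k hkK hk0
    have : S = Finset.univ.filter fun ip : Fin n1 × Fin n2 => x k ip.1 ip.2 ≠ 0 :=
      Finset.eq_of_subset_of_card_le hsub (by omega)
    rw [this, hcardx]
  · intro y hy1 hy2 _
    exact hzmin y hy1 hy2
end
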